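/- Let W ≥ 1 and let l : List Bool be a list of mark flags. Suppose the k-th aligned block of l is complete and fully marked, and no other complete aligned block of l is fully marked. Let l' = l.take (k*W) ++ l.drop ((k+1)*W) be the result of the clean operation removing that block. Then l'.count false = l.count false (cleanup removes only popped nodes, leaving the live stack contents unchanged), and l' has no fully marked complete aligned block (the size invariant with no fully marked block is restored after cleanup). -/

import Mathlib

/-- If the `k`-th aligned block of `l` is complete and fully marked and no other
complete aligned block is fully marked, then removing the `k`-th block preserves
the number of live (`false`) entries and leaves no fully marked complete block. -/
theorem clean_preserves_live_and_invariant
    (W : ℕ) (hW : 1 ≤ W) (l : List Bool) (k : ℕ)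
    (hk : (k + 1) * W ≤ l.length)
    (hmarked : ∀ b ∈ (l.drop (k * W)).take W, b = true)
    (honly : ∀ j, j ≠ k → (j + 1) * W ≤ l.length →
      ¬ (∀ b ∈ (l.drop (j * W)).take W, b = true)) :
    (l.take (k * W) ++ l.drop ((k + 1) * W)).count false = l.count false ∧
    ∀ j, (j + 1) * W ≤ (l.take (k * W) ++ l.drop ((k + 1) * W)).length →
      ¬ (∀ b ∈ ((l.take (k * W) ++ l.drop ((k + 1) * W)).drop (j * W)).take W,
          b = true) := by
  have hkW : k * W ≤ l.length := le_trans (Nat.mul_le_mul_right W (Nat.le_succ k)) hk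
  have hlen_take : (l.take (k * W)).length = k * W := by
    simp [List.length_take, Nat.min_eq_left hkW]
  have hsplit : l.drop (k * W) =
      (l.drop (k * W)).take W ++ l.drop ((k + 1) * W) := by
    have : (l.drop (k * W)).drop W = l.drop ((k + 1) * W) := by
      rw [List.drop_drop]
      congr 1
      ring
    rw [← this, List.take_append_drop]
  constructor
  · have hcount0 : ((l.drop (k * W)).take W).count false = 0 := by
      rw [List.count_eq_zero]
      intro h
      exact absurd (hmarked false h) (by simp)
    conv_rhs => rw [← List.take_append_drop (k * W) l, hsplit]
    simp [List.count_append, hcount0]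
  · intro j hj hall
    have e1 : (j + 1) * W = j * W + W := by ring
    have e2 : (k + 1) * W = k * W + W := by ring
    rcases lt_or_ge j k with hjk | hjk
    · -- the j-th block of l' is the j-th block of l
      have hjk1 : (j + 1) * W ≤ k * W := Nat.mul_le_mul_right W hjk
      have hblock : ((l.take (k * W) ++ l.drop ((k + 1) * W)).drop (j * W)).take W
          = (l.drop (j * W)).take W := by
        rw [List.drop_append_of_le_length
            (by rw [hlen_take]; omega : j * W ≤ (l.take (k*W)).length),
          List.take_append_of_le_length, List.drop_take, List.take_take]
        · congr 1
          omega
        · rw [List.length_drop, hlen_take]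
          omega
      rw [hblock] at hall
      exact honly j (Nat.ne_of_lt hjk) (le_trans hjk1 hkW) hall
    · -- the j-th block of l' is the (j+1)-st block of l
      have hjk1 : k * W ≤ j * W := Nat.mul_le_mul_right W hjk
      have hblock : (l.take (k * W) ++ l.drop ((k + 1) * W)).drop (j * W)
          = l.drop ((j + 1) * W) := by
        have h1 : j * W = (l.take (k * W)).length + (j * W - k * W) := by
          rw [hlen_take]; omega
        rw [h1, List.drop_length_add_append, List.drop_drop]
        congr 1
        omega
      have hlen' : (j + 1 + 1) * W ≤ l.length := by
        have h2 : (l.take (k * W) ++ l.drop ((k + 1) * W)).length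
            = k * W + (l.length - (k + 1) * W) := by
          simp [List.length_append, hlen_take]
        rw [h2] at hj
        have e3 : (j + 1 + 1) * W = j * W + W + W := by ring
        omega
      rw [hblock] at hall
      exact honly (j + 1) (by omega) hlen' hall
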